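/- Let Z = ∑_{k=1}^∞ α_k² ζ_k² where ∑_{k=1}^∞ α_k² = 1, sup_k α_k² > 0, and ζ_k are i.i.d. standard normal. Then for all z ∈ (0,1), P(Z ≤ z) ≤ exp((1 − z + log z)/(2 sup_k α_k²)). -/

import Mathlib

open MeasureTheory ProbabilityTheory
open Real Filter
open scoped Topology ENNReal NNReal


lemma wcsq_scalar {σ a t z : ℝ} (hσ : 0 < σ) (ha0 : 0 ≤ a) (haσ : a ≤ σ)
    (hz0 : 0 < z) (hz1 : z < 1) (ht : t = (1 - z) / (2 * σ * z)) :
    Real.sqrt ((1 + 2 * (t * a))⁻¹) ≤ Real.exp (Real.log z / (2 * σ) * a) := by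
  have ht0 : 0 ≤ t := by
    rw [ht]
    apply div_nonneg (by linarith) (by positivity)
  have h1 : (0:ℝ) < 1 + 2 * (t * a) := by nlinarith
  have hber : ((1:ℝ) + 2 * t * σ) ^ (a / σ) ≤ 1 + 2 * (t * a) := by
    have := rpow_one_add_le_one_add_mul_self
      (s := 2 * t * σ) (by nlinarith) (hp1 := by positivity)
      ((div_le_one hσ).2 haσ)
    calc ((1:ℝ) + 2 * t * σ) ^ (a / σ) ≤ 1 + a / σ * (2 * t * σ) := this
      _ = 1 + 2 * (t * a) := by field_simp
  have hzinv : (1:ℝ) + 2 * t * σ = z⁻¹ := by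
    rw [ht]
    field_simp
    ring
  rw [hzinv] at hber
  have hpow : (0:ℝ) < z ^ (a / σ) := Real.rpow_pos_of_pos hz0 _
  rw [Real.inv_rpow hz0.le] at hber
  have h2 : (1 + 2 * (t * a))⁻¹ ≤ z ^ (a / σ) := by
    calc (1 + 2 * (t * a))⁻¹ ≤ ((z ^ (a / σ))⁻¹)⁻¹ :=
          inv_anti₀ (inv_pos.2 hpow) hber
      _ = z ^ (a / σ) := inv_inv _
  refine (Real.sqrt_le_sqrt h2).trans_eq ?_
  rw [Real.sqrt_eq_rpow, ← Real.rpow_mul hz0.le, Real.rpow_def_of_pos hz0]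
  congr 1
  field_simp

lemma wcsq_pdf_eq (x : ℝ) :
    gaussianPDFReal 0 1 x = (Real.sqrt (2 * π))⁻¹ * Real.exp (-(1/2) * x ^ 2) := by
  simp only [gaussianPDFReal, NNReal.coe_one, mul_one, sub_zero]
  congr 1
  ring

lemma wcsq_gauss_mgf {s : ℝ} (hs : 0 ≤ s) :
    ∫⁻ x, ENNReal.ofReal (Real.exp (-(s * x ^ 2))) ∂(gaussianReal 0 1)
      = ENNReal.ofReal (Real.sqrt ((1 + 2 * s)⁻¹)) := by
  have hb : (0:ℝ) < s + 1/2 := by linarith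
  rw [gaussianReal_of_var_ne_zero 0 one_ne_zero,
    lintegral_withDensity_eq_lintegral_mul _ (measurable_gaussianPDF 0 1)
      (by fun_prop)]
  have hcongr : ∀ x : ℝ, (gaussianPDF 0 1 * fun x => ENNReal.ofReal (Real.exp (-(s * x ^ 2)))) x
      = ENNReal.ofReal ((Real.sqrt (2 * π))⁻¹ * Real.exp (-(s + 1/2) * x ^ 2)) := by
    intro x
    simp only [Pi.mul_apply, gaussianPDF, wcsq_pdf_eq,
      ← ENNReal.ofReal_mul (by positivity : (0:ℝ) ≤ (Real.sqrt (2*π))⁻¹ * Real.exp (-(1/2) * x^2))]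
    congr 1
    rw [mul_assoc, ← Real.exp_add]
    congr 2
    ring
  simp only [hcongr]
  have hint : Integrable (fun x : ℝ => (Real.sqrt (2 * π))⁻¹ * Real.exp (-(s + 1/2) * x ^ 2)) :=
    (integrable_exp_neg_mul_sq hb).const_mul _
  rw [← ofReal_integral_eq_lintegral_ofReal hint
    (Filter.Eventually.of_forall fun x => by positivity)]
  congr 1
  rw [integral_const_mul, integral_gaussian]
  rw [← Real.sqrt_inv, ← Real.sqrt_mul (by positivity)]
  congr 1
  rw [eq_comm, inv_eq_iff_eq_inv, eq_comm]
  field_simp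
  ring

lemma wcsq_pdf_eq' (x : ℝ) :
    gaussianPDFReal 0 1 x = (Real.sqrt (2 * π))⁻¹ * Real.exp (-(1/2) * x ^ 2) := by
  simp only [gaussianPDFReal, NNReal.coe_one, mul_one, sub_zero]
  congr 1
  ring

lemma wcsq_sq_integrable : Integrable (fun x : ℝ => x ^ 2 * Real.exp (-(1/2 : ℝ) * x ^ 2)) := by
  have h4 : Integrable (fun x : ℝ => Real.exp (-(1/4 : ℝ) * x ^ 2)) :=
    integrable_exp_neg_mul_sq (by norm_num)
  refine (h4.const_mul 4).mono ?_ ?_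
  · exact ((measurable_id.pow_const 2).mul
      ((measurable_id.pow_const 2).const_mul (-(1/2:ℝ))).exp).aestronglyMeasurable
  · refine Filter.Eventually.of_forall fun x => ?_
    have hx : (0:ℝ) ≤ x ^ 2 * Real.exp (-(1/2:ℝ) * x ^ 2) := by positivity
    rw [Real.norm_eq_abs, abs_of_nonneg hx, Real.norm_eq_abs]
    have key : x ^ 2 * Real.exp (-(1/4:ℝ) * x ^ 2) ≤ 4 := by
      have h1 : (1:ℝ) + (1/4:ℝ) * x ^ 2 ≤ Real.exp ((1/4:ℝ) * x ^ 2) :=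
        Real.add_one_le_exp _ |>.trans_eq' (by ring)
      have h2 : (0:ℝ) < Real.exp ((1/4:ℝ) * x ^ 2) := Real.exp_pos _
      have hneg : Real.exp (-(1/4:ℝ) * x ^ 2) = (Real.exp ((1/4:ℝ) * x ^ 2))⁻¹ := by
        rw [← Real.exp_neg]; ring_nf
      rw [hneg, mul_inv_le_iff₀ h2]
      nlinarith
    have : x ^ 2 * Real.exp (-(1/2:ℝ) * x ^ 2)
        = (x ^ 2 * Real.exp (-(1/4:ℝ) * x ^ 2)) * Real.exp (-(1/4:ℝ) * x ^ 2) := by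
      rw [mul_assoc, ← Real.exp_add]; congr 2; ring
    rw [this]
    have he : (0:ℝ) < Real.exp (-(1/4:ℝ) * x ^ 2) := Real.exp_pos _
    calc (x ^ 2 * Real.exp (-(1/4:ℝ) * x ^ 2)) * Real.exp (-(1/4:ℝ) * x ^ 2)
        ≤ 4 * Real.exp (-(1/4:ℝ) * x ^ 2) := by
          apply mul_le_mul_of_nonneg_right key he.le
      _ ≤ |4 * Real.exp (-(1/4:ℝ) * x ^ 2)| := le_abs_self _

lemma wcsq_gauss_sq_ne_top :
    ∫⁻ x, ENNReal.ofReal (x ^ 2) ∂(gaussianReal 0 1) ≠ ⊤ := by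
  rw [gaussianReal_of_var_ne_zero 0 one_ne_zero,
    lintegral_withDensity_eq_lintegral_mul _ (measurable_gaussianPDF 0 1) (by fun_prop)]
  have hcongr : ∀ x : ℝ, (gaussianPDF 0 1 * fun x => ENNReal.ofReal (x ^ 2)) x
      = ENNReal.ofReal ((Real.sqrt (2 * π))⁻¹ * (x ^ 2 * Real.exp (-(1/2:ℝ) * x ^ 2))) := by
    intro x
    simp only [Pi.mul_apply, gaussianPDF, wcsq_pdf_eq',
      ← ENNReal.ofReal_mul (by positivity : (0:ℝ) ≤ (Real.sqrt (2*π))⁻¹ * Real.exp (-(1/2:ℝ) * x^2))]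
    congr 1
    ring
  simp only [hcongr]
  have hint : Integrable (fun x : ℝ =>
      (Real.sqrt (2 * π))⁻¹ * (x ^ 2 * Real.exp (-(1/2:ℝ) * x ^ 2))) :=
    wcsq_sq_integrable.const_mul _
  rw [← ofReal_integral_eq_lintegral_ofReal hint
    (Filter.Eventually.of_forall fun x => by positivity)]
  exact ENNReal.ofReal_ne_top


/-- Lower deviation bound for a weighted chi-squared sum:
if `Z = ∑ₖ αₖ² ζₖ²` with `∑ₖ αₖ² = 1`, `supₖ αₖ² > 0`, and `ζₖ` i.i.d. standard
normal, then for all `z ∈ (0,1)`,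
`P(Z ≤ z) ≤ exp((1 - z + log z) / (2 supₖ αₖ²))`. -/
theorem weighted_chi_sq_lower_deviation
    {Ω : Type*} [MeasurableSpace Ω] (P : Measure Ω) [IsProbabilityMeasure P]
    (α : ℕ → ℝ) (hα : ∑' k, α k ^ 2 = 1) (hsup : 0 < ⨆ k, α k ^ 2)
    (ζ : ℕ → Ω → ℝ) (hmeas : ∀ k, Measurable (ζ k))
    (hindep : iIndepFun ζ P)
    (hlaw : ∀ k, P.map (ζ k) = gaussianReal 0 1)
    (Z : Ω → ℝ) (hZ : ∀ ω, Z ω = ∑' k, α k ^ 2 * ζ k ω ^ 2) :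
    ∀ z, 0 < z → z < 1 →
      (P {ω | Z ω ≤ z}).toReal
        ≤ Real.exp ((1 - z + Real.log z) / (2 * ⨆ k, α k ^ 2)) := by
  intro z hz0 hz1
  set σ : ℝ := ⨆ k, α k ^ 2 with hσdef
  have hσpos : 0 < σ := hsup
  have hsummable : Summable fun k => α k ^ 2 := by
    by_contra h
    rw [tsum_eq_zero_of_not_summable h] at hα
    norm_num at hα
  have hle1 : ∀ k, α k ^ 2 ≤ 1 := fun k =>
    hα ▸ Summable.le_tsum hsummable k fun j _ => sq_nonneg _
  have hbdd : BddAbove (Set.range fun k => α k ^ 2) := by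
    refine ⟨1, ?_⟩
    rintro x ⟨j, rfl⟩
    exact hle1 j
  have hleσ : ∀ k, α k ^ 2 ≤ σ := fun k => le_ciSup hbdd k
  set t : ℝ := (1 - z) / (2 * σ * z) with htdef
  have ht0 : 0 ≤ t := div_nonneg (by linarith) (by positivity)
  set g : ℕ → Ω → ℝ := fun k ω => α k ^ 2 * ζ k ω ^ 2 with hgdef
  have hg0 : ∀ k ω, 0 ≤ g k ω := fun k ω => by positivity
  have hGmeas : ∀ k, Measurable fun ω => ENNReal.ofReal (g k ω) := fun k => by
    apply Measurable.ennreal_ofReal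
    exact ((hmeas k).pow_const 2).const_mul _
  -- second moments
  have hmom : ∀ k, ∫⁻ ω, ENNReal.ofReal (g k ω) ∂P
      = ENNReal.ofReal (α k ^ 2) * ∫⁻ x, ENNReal.ofReal (x ^ 2) ∂(gaussianReal 0 1) := by
    intro k
    have h1 : ∀ ω, ENNReal.ofReal (g k ω)
        = ENNReal.ofReal (α k ^ 2) * ENNReal.ofReal (ζ k ω ^ 2) := fun ω =>
      ENNReal.ofReal_mul (sq_nonneg _)
    simp only [h1]
    rw [lintegral_const_mul _ (by exact ((hmeas k).pow_const 2).ennreal_ofReal)]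
    congr 1
    rw [← hlaw k, lintegral_map (by fun_prop) (hmeas k)]
  -- a.e. summability
  have hsum_ae : ∀ᵐ ω ∂P, Summable fun k => g k ω := by
    have htot : ∫⁻ ω, ∑' k, ENNReal.ofReal (g k ω) ∂P ≠ ⊤ := by
      rw [lintegral_tsum fun k => (hGmeas k).aemeasurable]
      simp_rw [hmom]
      rw [ENNReal.tsum_mul_right, ← ENNReal.ofReal_tsum_of_nonneg (fun k => sq_nonneg _) hsummable,
        hα, ENNReal.ofReal_one, one_mul]
      exact wcsq_gauss_sq_ne_top
    filter_upwards [ae_lt_top (Measurable.ennreal_tsum hGmeas) htot] with ω hω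
    have := ENNReal.summable_toReal hω.ne
    refine this.congr fun k => ?_
    exact ENNReal.toReal_ofReal (hg0 k ω)
  -- Z agrees a.e. with a measurable function
  set W : Ω → ℝ := fun ω => (∑' k, ENNReal.ofReal (g k ω)).toReal with hWdef
  have hWmeas : Measurable W := (Measurable.ennreal_tsum hGmeas).ennreal_toReal
  have hZW : ∀ᵐ ω ∂P, Z ω = W ω := by
    filter_upwards [hsum_ae] with ω hsum
    rw [hZ ω, hWdef]
    simp only
    rw [← ENNReal.ofReal_tsum_of_nonneg (fun k => hg0 k ω) hsum,
      ENNReal.toReal_ofReal (tsum_nonneg fun k => hg0 k ω)]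
  set A : ℝ≥0∞ := ENNReal.ofReal (Real.exp (-(t * z))) with hAdef
  have hfae : AEMeasurable (fun ω => ENNReal.ofReal (Real.exp (-(t * Z ω)))) P := by
    have hWm : Measurable fun ω => ENNReal.ofReal (Real.exp (-(t * W ω))) := by
      apply Measurable.ennreal_ofReal
      exact ((hWmeas.const_mul t).neg).exp
    exact hWm.aemeasurable.congr (hZW.mono fun ω h => by simp only; rw [h])
  -- Markov / Chernoff step
  have markov : A * P {ω | Z ω ≤ z} ≤ ∫⁻ ω, ENNReal.ofReal (Real.exp (-(t * Z ω))) ∂P := by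
    refine le_trans ?_ (mul_meas_ge_le_lintegral₀ hfae A)
    refine mul_le_mul_right (measure_mono fun ω (hω : Z ω ≤ z) => ?_) A
    exact ENNReal.ofReal_le_ofReal (Real.exp_le_exp.2 (by
      simp only [neg_le_neg_iff]
      exact mul_le_mul_of_nonneg_left hω ht0))
  -- factorization via independence
  set φ : ℕ → ℝ → ℝ≥0∞ := fun k x => ENNReal.ofReal (Real.exp (-(t * α k ^ 2 * x ^ 2)))
    with hφdef
  have hφmeas : ∀ k, Measurable (φ k) := fun k => by
    apply Measurable.ennreal_ofReal
    exact (((measurable_id.pow_const 2).const_mul _).neg).exp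
  have hcomp : iIndepFun (fun k => φ k ∘ ζ k) P :=
    hindep.comp φ hφmeas
  have hfactor : ∀ n, ∫⁻ ω, ∏ k ∈ Finset.range n, φ k (ζ k ω) ∂P
      = ∏ k ∈ Finset.range n, ∫⁻ ω, φ k (ζ k ω) ∂P := by
    intro n
    induction n with
    | zero => simp
    | succ n ih =>
      simp only [Finset.prod_range_succ]
      have hprodmeas : Measurable fun ω => ∏ k ∈ Finset.range n, φ k (ζ k ω) :=
        Finset.measurable_prod _ fun k _ => (hφmeas k).comp (hmeas k)
      have hind2 : IndepFun (fun ω => ∏ k ∈ Finset.range n, φ k (ζ k ω))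
          (fun ω => φ n (ζ n ω)) P := by
        have := hcomp.indepFun_finsetProd_of_notMem
          (fun k => (hφmeas k).comp (hmeas k)) (Finset.notMem_range_self (n := n))
        convert this using 1
        funext ω
        simp [Finset.prod_apply, Function.comp]
        rfl
      calc ∫⁻ ω, (∏ k ∈ Finset.range n, φ k (ζ k ω)) * φ n (ζ n ω) ∂P
          = (∫⁻ ω, ∏ k ∈ Finset.range n, φ k (ζ k ω) ∂P) * ∫⁻ ω, φ n (ζ n ω) ∂P := by
            exact lintegral_mul_eq_lintegral_mul_lintegral_of_indepFun''
              hprodmeas.aemeasurable (((hφmeas n).comp (hmeas n)).aemeasurable) hind2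
        _ = (∏ k ∈ Finset.range n, ∫⁻ ω, φ k (ζ k ω) ∂P) * ∫⁻ ω, φ n (ζ n ω) ∂P := by
            rw [ih]
  -- single-factor bound
  set c : ℝ := Real.log z / (2 * σ) with hcdef
  have hone : ∀ k, ∫⁻ ω, φ k (ζ k ω) ∂P ≤ ENNReal.ofReal (Real.exp (c * α k ^ 2)) := by
    intro k
    have h1 : ∫⁻ ω, φ k (ζ k ω) ∂P = ∫⁻ x, φ k x ∂(gaussianReal 0 1) := by
      rw [← hlaw k, lintegral_map (hφmeas k) (hmeas k)]
    rw [h1, hφdef]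
    simp only
    rw [wcsq_gauss_mgf (by positivity)]
    apply ENNReal.ofReal_le_ofReal
    have := wcsq_scalar hσpos (sq_nonneg (α k)) (hleσ k) hz0 hz1 htdef
    calc Real.sqrt ((1 + 2 * (t * α k ^ 2))⁻¹)
        ≤ Real.exp (Real.log z / (2 * σ) * α k ^ 2) := this
      _ = Real.exp (c * α k ^ 2) := by rw [hcdef]
  -- pointwise domination of exp(-tZ) by finite products
  have hdom : ∀ n, (∫⁻ ω, ENNReal.ofReal (Real.exp (-(t * Z ω))) ∂P)
      ≤ ∫⁻ ω, ∏ k ∈ Finset.range n, φ k (ζ k ω) ∂P := by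
    intro n
    refine lintegral_mono_ae ?_
    filter_upwards [hsum_ae] with ω hsum
    have hZn : ∑ k ∈ Finset.range n, g k ω ≤ Z ω := by
      rw [hZ ω]
      exact Summable.sum_le_tsum _ (fun k _ => hg0 k ω) hsum
    calc ENNReal.ofReal (Real.exp (-(t * Z ω)))
        ≤ ENNReal.ofReal (Real.exp (-(t * ∑ k ∈ Finset.range n, g k ω))) := by
          apply ENNReal.ofReal_le_ofReal
          apply Real.exp_le_exp.2
          simp only [neg_le_neg_iff]
          exact mul_le_mul_of_nonneg_left hZn ht0
      _ = ∏ k ∈ Finset.range n, φ k (ζ k ω) := by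
          rw [hφdef]
          simp only
          rw [← ENNReal.ofReal_prod_of_nonneg (fun k _ => (Real.exp_pos _).le),
            ← Real.exp_sum]
          congr 1
          rw [Real.exp_eq_exp, Finset.mul_sum,
            show (∑ x ∈ Finset.range n, -(t * α x ^ 2 * ζ x ω ^ 2))
              = -∑ x ∈ Finset.range n, t * α x ^ 2 * ζ x ω ^ 2 from Finset.sum_neg_distrib _,
            neg_inj]
          refine Finset.sum_congr rfl fun k _ => ?_
          simp only [hgdef]
          ring
  -- combine: for every n
  have hn : ∀ n, A * P {ω | Z ω ≤ z}
      ≤ ENNReal.ofReal (Real.exp (c * ∑ k ∈ Finset.range n, α k ^ 2)) := by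
    intro n
    calc A * P {ω | Z ω ≤ z}
        ≤ ∫⁻ ω, ENNReal.ofReal (Real.exp (-(t * Z ω))) ∂P := markov
      _ ≤ ∫⁻ ω, ∏ k ∈ Finset.range n, φ k (ζ k ω) ∂P := hdom n
      _ = ∏ k ∈ Finset.range n, ∫⁻ ω, φ k (ζ k ω) ∂P := hfactor n
      _ ≤ ∏ k ∈ Finset.range n, ENNReal.ofReal (Real.exp (c * α k ^ 2)) :=
          Finset.prod_le_prod' fun k _ => hone k
      _ = ENNReal.ofReal (Real.exp (c * ∑ k ∈ Finset.range n, α k ^ 2)) := by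
          rw [← ENNReal.ofReal_prod_of_nonneg (fun k _ => (Real.exp_pos _).le),
            ← Real.exp_sum, ← Finset.mul_sum]
  -- limit n → ∞
  have hlim : A * P {ω | Z ω ≤ z} ≤ ENNReal.ofReal (Real.exp (c * 1)) := by
    have hs : Tendsto (fun n => ∑ k ∈ Finset.range n, α k ^ 2) atTop (𝓝 1) := by
      have := hsummable.hasSum.tendsto_sum_nat
      rwa [hα] at this
    have htend : Tendsto (fun n => ENNReal.ofReal (Real.exp (c * ∑ k ∈ Finset.range n, α k ^ 2)))
        atTop (𝓝 (ENNReal.ofReal (Real.exp (c * 1)))) := by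
      exact (ENNReal.continuous_ofReal.tendsto _).comp
        ((Real.continuous_exp.tendsto _).comp (hs.const_mul c))
    exact ge_of_tendsto' htend hn
  -- conclude
  have hA0 : A ≠ 0 := by
    rw [hAdef]
    simp [Real.exp_pos]
  have hAtop : A ≠ ⊤ := ENNReal.ofReal_ne_top
  have hfinal : P {ω | Z ω ≤ z} ≤ ENNReal.ofReal (Real.exp ((1 - z + Real.log z) / (2 * σ))) := by
    have h2 : P {ω | Z ω ≤ z} ≤ ENNReal.ofReal (Real.exp (c * 1)) / A := by
      rw [ENNReal.le_div_iff_mul_le (Or.inl hA0) (Or.inl hAtop), mul_comm]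
      exact hlim
    refine h2.trans_eq ?_
    rw [hAdef, ← ENNReal.ofReal_div_of_pos (Real.exp_pos _), ← Real.exp_sub]
    congr 1
    rw [hcdef, htdef]
    field_simp
    ring
  calc (P {ω | Z ω ≤ z}).toReal
      ≤ Real.exp ((1 - z + Real.log z) / (2 * σ)) :=
        ENNReal.toReal_le_of_le_ofReal (Real.exp_nonneg _) hfinal
    _ = Real.exp ((1 - z + Real.log z) / (2 * ⨆ k, α k ^ 2)) := by rw [hσdef]
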